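/- Let u be a convex function on a bounded convex open set Ω ⊂ ℝⁿ, continuous up to the boundary with u = 0 on ∂Ω, whose Monge–Ampère measure satisfies Mu ≤ Lebesgue measure (i.e. |∂u(E)| ≤ |E| for all Borel E ⊂ Ω). Then |Ω| ≥ c(n) |min_Ω u|^{n/2} for a dimensional constant c(n) > 0. -/

import Mathlib

open MeasureTheory Pointwise

/-- The subgradient of a convex function `u` (relative to the domain `Ω`) at `x`. -/
def subgrad {n : ℕ} (u : EuclideanSpace ℝ (Fin n) → ℝ) (Ω : Set (EuclideanSpace ℝ (Fin n)))
    (x : EuclideanSpace ℝ (Fin n)) : Set (EuclideanSpace ℝ (Fin n)) :=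
  {p | ∀ y ∈ Ω, u x + (inner ℝ p (y - x) : ℝ) ≤ u y}

/-- The subgradient image `∂u(s)` of a set `s`. -/
def subgradImage {n : ℕ} (u : EuclideanSpace ℝ (Fin n) → ℝ) (Ω : Set (EuclideanSpace ℝ (Fin n)))
    (s : Set (EuclideanSpace ℝ (Fin n))) : Set (EuclideanSpace ℝ (Fin n)) :=
  ⋃ x ∈ s, subgrad u Ω x


/-- Sliding plane lemma: if the plane through `(x₀, u x₀)` with slope `p` lies below `u`
on the frontier, then `p` is in the subgradient image of `Ω`. -/
lemma slide_mem {n : ℕ} {Ω : Set (EuclideanSpace ℝ (Fin n))} {u : EuclideanSpace ℝ (Fin n) → ℝ}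
    (hΩo : IsOpen Ω) (hb : Bornology.IsBounded Ω) (hu : ContinuousOn u (closure Ω))
    {x₀ p : EuclideanSpace ℝ (Fin n)} (hx₀ : x₀ ∈ Ω)
    (hp : ∀ y ∈ frontier Ω, u x₀ ≤ u y - (inner ℝ p (y - x₀) : ℝ)) :
    p ∈ subgradImage u Ω Ω := by
  set g : EuclideanSpace ℝ (Fin n) → ℝ := fun y => u y - (inner ℝ p (y - x₀) : ℝ) with hg
  have hgc : ContinuousOn g (closure Ω) := by
    apply hu.sub
    exact (Continuous.inner continuous_const (continuous_id.sub continuous_const)).continuousOn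
  have hC : IsCompact (closure Ω) := hb.isCompact_closure
  obtain ⟨z', hz'C, hz'min⟩ := hC.exists_isMinOn ⟨x₀, subset_closure hx₀⟩ hgc
  have hgx₀ : g x₀ = u x₀ := by simp [hg]
  have key : ∃ z ∈ Ω, ∀ y ∈ closure Ω, g z ≤ g y := by
    by_cases hz' : z' ∈ Ω
    · exact ⟨z', hz', fun y hy => hz'min hy⟩
    · refine ⟨x₀, hx₀, fun y hy => ?_⟩
      have hfr : z' ∈ frontier Ω := by
        rw [hΩo.frontier_eq]; exact ⟨hz'C, hz'⟩
      have h1 : g x₀ ≤ g z' := by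
        have := hp z' hfr; rw [hgx₀]; exact this
      exact h1.trans (hz'min hy)
  obtain ⟨z, hz, hzmin⟩ := key
  refine Set.mem_iUnion₂.2 ⟨z, hz, ?_⟩
  intro y hy
  have h := hzmin y (subset_closure hy)
  have hinner : (inner ℝ p (y - x₀) : ℝ) - (inner ℝ p (z - x₀) : ℝ) = (inner ℝ p (y - z) : ℝ) := by
    rw [← inner_sub_right]; congr 1; abel
  simp only [hg] at h
  linarith

section Aux
variable {n : ℕ}

-- cross polytope and simplex (depend only on n)
def crossSet (n : ℕ) : Set (EuclideanSpace ℝ (Fin n)) := {t | ∑ i, |t i| ≤ 1}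
def simplexSet (n : ℕ) : Set (EuclideanSpace ℝ (Fin n)) := {t | (∀ i, 0 ≤ t i) ∧ ∑ i, t i ≤ 1}

lemma crossSet_subset_ball : crossSet n ⊆ Metric.closedBall 0 1 := by
  intro t ht
  simp only [Metric.mem_closedBall, dist_zero_right]
  have h1 : ‖t‖ = Real.sqrt (∑ i, ‖t i‖ ^ 2) := EuclideanSpace.norm_eq t
  rw [h1]
  have h2 : ∑ i, ‖t i‖ ^ 2 ≤ 1 := by
    have h3 : ∑ i, ‖t i‖ ^ 2 ≤ (∑ i, ‖t i‖) ^ 2 :=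
      Finset.sum_sq_le_sq_sum_of_nonneg (fun i _ => norm_nonneg _)
    have h4 : (∑ i, ‖t i‖) ^ 2 ≤ 1 := by
      have : ∑ i, ‖t i‖ ≤ 1 := by simpa [Real.norm_eq_abs, crossSet] using ht
      nlinarith [Finset.sum_nonneg (fun i (_ : i ∈ Finset.univ) => norm_nonneg (t i))]
    linarith
  calc Real.sqrt (∑ i, ‖t i‖ ^ 2) ≤ Real.sqrt 1 := Real.sqrt_le_sqrt h2
    _ = 1 := Real.sqrt_one

lemma crossSet_volume_lt_top : volume (crossSet n) < ⊤ :=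
  lt_of_le_of_lt (measure_mono crossSet_subset_ball) measure_closedBall_lt_top

lemma crossSet_volume_pos : 0 < volume (crossSet n) := by
  have hopen : IsOpen {t : EuclideanSpace ℝ (Fin n) | ∑ i, |t i| < 1} := by
    have hc : Continuous fun t : EuclideanSpace ℝ (Fin n) => ∑ i, |t i| := by
      apply continuous_finset_sum
      intro i _
      exact (EuclideanSpace.proj i).continuous.abs
    exact isOpen_lt hc continuous_const
  have hsub : {t : EuclideanSpace ℝ (Fin n) | ∑ i, |t i| < 1} ⊆ crossSet n :=
    fun t ht => le_of_lt (Set.mem_setOf_eq ▸ ht)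
  refine lt_of_lt_of_le ?_ (measure_mono hsub)
  refine hopen.measure_pos volume ⟨0, ?_⟩
  simp

lemma simplexSet_subset_crossSet : simplexSet n ⊆ crossSet n := by
  rintro t ⟨h0, h1⟩
  simp only [crossSet, Set.mem_setOf_eq]
  calc ∑ i, |t i| = ∑ i, t i := by
        refine Finset.sum_congr rfl fun i _ => abs_of_nonneg (h0 i)
    _ ≤ 1 := h1

lemma simplexSet_volume_lt_top : volume (simplexSet n) < ⊤ :=
  lt_of_le_of_lt (measure_mono simplexSet_subset_crossSet) crossSet_volume_lt_top

lemma simplexSet_volume_pos (hn : 1 ≤ n) : 0 < volume (simplexSet n) := by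
  set V : Set (EuclideanSpace ℝ (Fin n)) := ⋂ i, (EuclideanSpace.proj i) ⁻¹' Set.Ioo 0 (1 / (n:ℝ))
  have hopen : IsOpen V :=
    isOpen_iInter_of_finite fun i =>
      ((EuclideanSpace.proj i).continuous.isOpen_preimage _ isOpen_Ioo)
  have hne : V.Nonempty := by
    refine ⟨(WithLp.equiv 2 _).symm (fun _ => 1 / (2 * (n:ℝ))), ?_⟩
    have hn0 : (0:ℝ) < n := by exact_mod_cast hn
    refine Set.mem_iInter.2 fun i => ?_
    simp only [Set.mem_preimage]
    have : (EuclideanSpace.proj i) ((WithLp.equiv 2 _).symm (fun _ => 1 / (2 * (n:ℝ)))) =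
        1 / (2 * (n:ℝ)) := by
      simp [EuclideanSpace.proj]
    rw [this]
    constructor
    · positivity
    · rw [div_lt_div_iff₀ (by positivity) hn0]; nlinarith
  have hsub : V ⊆ simplexSet n := by
    intro t ht
    rw [Set.mem_iInter] at ht
    have hti : ∀ i, t i ∈ Set.Ioo 0 (1/(n:ℝ)) := fun i => ht i
    constructor
    · exact fun i => (hti i).1.le
    · have hn0 : (0:ℝ) < n := by exact_mod_cast hn
      calc ∑ i, t i ≤ ∑ _i : Fin n, 1/(n:ℝ) :=
            Finset.sum_le_sum fun i _ => (hti i).2.le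
        _ = n * (1/(n:ℝ)) := by
            rw [Finset.sum_const, Finset.card_univ, Fintype.card_fin, nsmul_eq_mul]
        _ = 1 := by field_simp
  exact lt_of_lt_of_le (hopen.measure_pos volume hne) (measure_mono hsub)

end Aux

/-- matrix whose rows are the coordinates of `w i - x₀` -/
noncomputable def matOf {n : ℕ} (x₀ : EuclideanSpace ℝ (Fin n))
    (w : Fin n → EuclideanSpace ℝ (Fin n)) :
    Matrix (Fin n) (Fin n) ℝ := Matrix.of fun i j => (w i - x₀) j

lemma exists_max_det {n : ℕ} (hn : 1 ≤ n) {Ω : Set (EuclideanSpace ℝ (Fin n))}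
    (hΩo : IsOpen Ω) (hb : Bornology.IsBounded Ω)
    {x₀ : EuclideanSpace ℝ (Fin n)} (hx₀ : x₀ ∈ Ω) :
    ∃ w : Fin n → EuclideanSpace ℝ (Fin n), (∀ i, w i ∈ closure Ω) ∧
      0 < |(matOf x₀ w).det| ∧
      ∃ b : Module.Basis (Fin n) ℝ (EuclideanSpace ℝ (Fin n)), ⇑b = (fun i => w i - x₀) ∧
        ∀ y ∈ closure Ω, ∀ k, |b.repr (y - x₀) k| ≤ 1 := by
  classical
  haveI : Nonempty (Fin n) := ⟨⟨0, hn⟩⟩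
  have hC : IsCompact (closure Ω) := hb.isCompact_closure
  have hfc : Continuous fun v : Fin n → EuclideanSpace ℝ (Fin n) => |(matOf x₀ v).det| := by
    refine Continuous.abs ?_
    refine Continuous.matrix_det (continuous_matrix fun i j => ?_)
    have : (fun v : Fin n → EuclideanSpace ℝ (Fin n) => matOf x₀ v i j) =
        (fun v : Fin n → EuclideanSpace ℝ (Fin n) => (EuclideanSpace.proj j) (v i - x₀)) := rfl
    rw [this]
    exact (EuclideanSpace.proj j).continuous.comp ((continuous_apply i).sub continuous_const)
  obtain ⟨w, hwC, hwmax⟩ := (isCompact_univ_pi fun _ : Fin n => hC).exists_isMaxOn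
    ⟨fun _ => x₀, fun i _ => subset_closure hx₀⟩ hfc.continuousOn
  have hwC' : ∀ i, w i ∈ closure Ω := fun i => hwC i (Set.mem_univ i)
  obtain ⟨ε, hε, hball⟩ := Metric.isOpen_iff.1 hΩo x₀ hx₀
  have hDpos : 0 < |(matOf x₀ w).det| := by
    set v₀ : Fin n → EuclideanSpace ℝ (Fin n) := fun i => x₀ + EuclideanSpace.single i (ε/2)
      with hv₀
    have hv₀C : v₀ ∈ Set.univ.pi fun _ : Fin n => closure Ω := by
      intro i _
      apply subset_closure
      apply hball
      simp only [hv₀, Metric.mem_ball, dist_eq_norm, add_sub_cancel_left,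
        EuclideanSpace.norm_single, Real.norm_eq_abs]
      rw [abs_of_pos (by linarith)]
      linarith
    have hfv₀ : |(matOf x₀ v₀).det| = (ε/2)^n := by
      have hmat : matOf x₀ v₀ = Matrix.diagonal fun _ => ε/2 := by
        ext i j
        simp only [matOf, Matrix.of_apply, hv₀, add_sub_cancel_left,
          EuclideanSpace.single_apply, Matrix.diagonal_apply]
        by_cases h : i = j
        · subst h; simp
        · rw [if_neg h, if_neg (Ne.symm h)]
      simp only [hmat, Matrix.det_diagonal, Finset.prod_const, Finset.card_univ,
        Fintype.card_fin]
      rw [abs_of_pos (by positivity)]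
    have hle : |(matOf x₀ v₀).det| ≤ |(matOf x₀ w).det| := hwmax hv₀C
    calc (0:ℝ) < (ε/2)^n := by positivity
      _ = |(matOf x₀ v₀).det| := hfv₀.symm
      _ ≤ _ := hle
  have hMdet : (matOf x₀ w).det ≠ 0 := by
    intro h; rw [h] at hDpos; simp at hDpos
  set g : Fin n → EuclideanSpace ℝ (Fin n) := fun i => w i - x₀ with hgdef
  have hrows : LinearIndependent ℝ (fun i => matOf x₀ w i) :=
    Matrix.linearIndependent_rows_iff_isUnit.2
      ((Matrix.isUnit_iff_isUnit_det _).2 (isUnit_iff_ne_zero.2 hMdet))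
  have hg : LinearIndependent ℝ g := by
    have hker : LinearMap.ker ((WithLp.linearEquiv 2 ℝ (Fin n → ℝ)).symm.toLinearMap) = ⊥ :=
      LinearMap.ker_eq_bot_of_injective (WithLp.linearEquiv 2 ℝ (Fin n → ℝ)).symm.injective
    exact hrows.map' ((WithLp.linearEquiv 2 ℝ (Fin n → ℝ)).symm.toLinearMap) hker
  set b : Module.Basis (Fin n) ℝ (EuclideanSpace ℝ (Fin n)) :=
    basisOfLinearIndependentOfCardEqFinrank hg
      (by simp [finrank_euclideanSpace_fin]) with hbdef
  have hbcoe : ⇑b = g := coe_basisOfLinearIndependentOfCardEqFinrank _ _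
  refine ⟨w, hwC', hDpos, b, hbcoe, ?_⟩
  intro y hy k
  set t : Fin n → ℝ := fun i => b.repr (y - x₀) i with ht
  have hsum : ∑ i, t i • g i = y - x₀ := by
    conv_rhs => rw [← b.sum_repr (y - x₀)]
    refine Finset.sum_congr rfl fun i _ => ?_
    rw [hbcoe]
  have hrow : (fun j => (y - x₀) j) = ∑ i, t i • matOf x₀ w i := by
    funext j
    have e1 : (y - x₀) j = (EuclideanSpace.proj j) (y - x₀) := rfl
    rw [e1, ← hsum, map_sum]
    rw [Finset.sum_apply]
    refine Finset.sum_congr rfl fun i _ => ?_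
    rw [_root_.map_smul]
    rfl
  have hupd : matOf x₀ (Function.update w k y) =
      (matOf x₀ w).updateRow k (fun j => (y - x₀) j) := by
    ext i j
    simp only [matOf, Matrix.of_apply, Matrix.updateRow_apply, Function.update_apply]
    by_cases h : i = k
    · simp [h]
    · simp [h]
  have hdet : |(matOf x₀ (Function.update w k y)).det| = |t k| * |(matOf x₀ w).det| := by
    rw [hupd, hrow, Matrix.det_updateRow_sum, smul_eq_mul, abs_mul]
  have hmem : Function.update w k y ∈ Set.univ.pi fun _ : Fin n => closure Ω := by
    intro i _
    by_cases h : i = k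
    · subst h; rw [Function.update_self]; exact hy
    · rw [Function.update_of_ne h]; exact hwC' i
  have hle : |(matOf x₀ (Function.update w k y)).det| ≤ |(matOf x₀ w).det| := hwmax hmem
  rw [hdet] at hle
  nlinarith [hDpos, abs_nonneg (t k)]

theorem stmt_3 (n : ℕ) (hn : 1 ≤ n) :
    ∃ c > (0:ℝ), ∀ (Ω : Set (EuclideanSpace ℝ (Fin n))) (u : EuclideanSpace ℝ (Fin n) → ℝ),
      IsOpen Ω → Convex ℝ Ω → Bornology.IsBounded Ω → Ω.Nonempty →
      ConvexOn ℝ (closure Ω) u → ContinuousOn u (closure Ω) →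
      (∀ x ∈ frontier Ω, u x = 0) →
      (∀ E ⊆ Ω, MeasurableSet E → volume (subgradImage u Ω E) ≤ volume E) →
      c * |sInf (u '' closure Ω)| ^ ((n : ℝ) / 2) ≤ (volume Ω).toReal := by
  classical
  haveI : Nonempty (Fin n) := ⟨⟨0, hn⟩⟩
  set vB : ℝ := (volume (crossSet n)).toReal with hvB
  set vS : ℝ := (volume (simplexSet n)).toReal with hvS
  have hvBpos : 0 < vB := ENNReal.toReal_pos crossSet_volume_pos.ne' crossSet_volume_lt_top.ne
  have hvSpos : 0 < vS :=
    ENNReal.toReal_pos (simplexSet_volume_pos hn).ne' simplexSet_volume_lt_top.ne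
  refine ⟨Real.sqrt (vB * vS), Real.sqrt_pos.2 (by positivity), ?_⟩
  intro Ω u hΩo hconv hb hne hcu hu hub hMA
  have hC : IsCompact (closure Ω) := hb.isCompact_closure
  have hCne : (closure Ω).Nonempty := hne.closure
  have hA : IsCompact (u '' closure Ω) := hC.image_of_continuousOn hu
  obtain ⟨x₀, hx₀C, hux₀⟩ := hA.sInf_mem (hCne.image u)
  -- the frontier is nonempty, so `sInf ≤ 0`
  have hΩne_univ : Ω ≠ Set.univ := by
    intro h
    obtain ⟨R, hR⟩ := hb.subset_closedBall 0
    have hx : EuclideanSpace.single (⟨0, hn⟩ : Fin n) (|R| + 1) ∈ Ω := h ▸ Set.mem_univ _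
    have h2 := hR hx
    rw [Metric.mem_closedBall, dist_zero_right, EuclideanSpace.norm_single,
      Real.norm_eq_abs] at h2
    have h3 : |R| + 1 ≤ |(|R| + 1)| := le_abs_self _
    have h4 : R ≤ |R| := le_abs_self R
    linarith [h2.trans h4]
  obtain ⟨xb, hxb⟩ := nonempty_frontier_iff.2 ⟨hne, hΩne_univ⟩
  have hsInf0 : sInf (u '' closure Ω) ≤ 0 :=
    csInf_le hA.bddBelow ⟨xb, frontier_subset_closure hxb, hub xb hxb⟩
  set m : ℝ := -sInf (u '' closure Ω) with hm_def
  have hm : 0 ≤ m := by simp only [hm_def]; linarith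
  have habs : |sInf (u '' closure Ω)| = m := abs_of_nonpos hsInf0
  rcases eq_or_lt_of_le hm with hm0 | hmpos
  · rw [habs, ← hm0, Real.zero_rpow (by positivity : ((n:ℝ)/2) ≠ 0), mul_zero]
    exact ENNReal.toReal_nonneg
  -- main case : m > 0
  have hux₀m : u x₀ = -m := by rw [hux₀]; simp [hm_def]
  have hx₀Ω : x₀ ∈ Ω := by
    by_contra hxx
    have hfr : x₀ ∈ frontier Ω := by rw [hΩo.frontier_eq]; exact ⟨hx₀C, hxx⟩
    have := hub x₀ hfr
    rw [hux₀m] at this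
    linarith
  obtain ⟨w, hwC, hDpos, b, hbcoe, hcoef⟩ := exists_max_det hn hΩo hb hx₀Ω
  set M : Matrix (Fin n) (Fin n) ℝ := matOf x₀ w with hMdef
  set D : ℝ := |M.det| with hDdef
  have hMdet : M.det ≠ 0 := fun h => by rw [hDdef, h] at hDpos; simp at hDpos
  -- the dual polytope
  set Q : Set (EuclideanSpace ℝ (Fin n)) :=
    {p | ∑ i, |(inner ℝ p (w i - x₀) : ℝ)| ≤ 1} with hQdef
  -- key coordinate bound
  have hkey : ∀ q ∈ Q, ∀ y ∈ closure Ω, (inner ℝ q (y - x₀) : ℝ) ≤ 1 := by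
    intro q hq y hy
    have hyrepr : y - x₀ = ∑ i, b.repr (y - x₀) i • (w i - x₀) := by
      conv_lhs => rw [← b.sum_repr (y - x₀)]
      exact Finset.sum_congr rfl fun i _ => by rw [hbcoe]
    calc (inner ℝ q (y - x₀) : ℝ)
        = ∑ i, b.repr (y - x₀) i * (inner ℝ q (w i - x₀) : ℝ) := by
          conv_lhs => rw [hyrepr]
          rw [inner_sum]
          exact Finset.sum_congr rfl fun i _ => real_inner_smul_right _ _ _
      _ ≤ ∑ i, |(inner ℝ q (w i - x₀) : ℝ)| := by
          refine Finset.sum_le_sum fun i _ => ?_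
          calc b.repr (y - x₀) i * (inner ℝ q (w i - x₀) : ℝ)
              ≤ |b.repr (y - x₀) i * (inner ℝ q (w i - x₀) : ℝ)| := le_abs_self _
            _ = |b.repr (y - x₀) i| * |(inner ℝ q (w i - x₀) : ℝ)| := abs_mul _ _
            _ ≤ 1 * |(inner ℝ q (w i - x₀) : ℝ)| :=
                mul_le_mul_of_nonneg_right (hcoef y hy i) (abs_nonneg _)
            _ = _ := one_mul _
      _ ≤ 1 := hq
  -- `m • Q` is inside the subgradient image
  have hQsub : m • Q ⊆ subgradImage u Ω Ω := by
    rintro p ⟨q, hq, rfl⟩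
    apply slide_mem hΩo hb hu hx₀Ω
    intro y hyfr
    have h1 : (inner ℝ (m • q) (y - x₀) : ℝ) = m * (inner ℝ q (y - x₀) : ℝ) :=
      real_inner_smul_left _ _ _
    have h2 : (inner ℝ q (y - x₀) : ℝ) ≤ 1 := hkey q hq y (frontier_subset_closure hyfr)
    have h3 : m * (inner ℝ q (y - x₀) : ℝ) ≤ m * 1 := mul_le_mul_of_nonneg_left h2 hm
    rw [hub y hyfr, hux₀m, h1]
    linarith
  -- volume of Q
  have hQpre : Q = (Matrix.toEuclideanLin M) ⁻¹' crossSet n := by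
    ext p
    have hco : ∀ i, ((Matrix.toEuclideanLin M p) i : ℝ) = (inner ℝ p (w i - x₀) : ℝ) := by
      intro i
      rw [Matrix.toEuclideanLin_apply, PiLp.toLp_apply]
      simp only [Matrix.mulVec, dotProduct, PiLp.inner_apply, RCLike.inner_apply,
        starRingEnd_apply, star_trivial, hMdef, matOf, Matrix.of_apply,
        WithLp.equiv_apply]
    simp only [hQdef, Set.mem_setOf_eq, Set.mem_preimage, crossSet]
    constructor
    · intro h; simpa only [hco] using h
    · intro h; simpa only [hco] using h
  have hdetLq : LinearMap.det (Matrix.toEuclideanLin M) = M.det := by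
    rw [Matrix.toEuclideanLin_eq_toLin]; exact LinearMap.det_toLin _ _
  have hvolQ : volume Q = ENNReal.ofReal D⁻¹ * volume (crossSet n) := by
    rw [hQpre, Measure.addHaar_preimage_linearMap volume (by rw [hdetLq]; exact hMdet)]
    rw [hdetLq, abs_inv]
  -- simplex image inside closure Ω
  set L' : EuclideanSpace ℝ (Fin n) →ₗ[ℝ] EuclideanSpace ℝ (Fin n) :=
    Matrix.toEuclideanLin M.transpose with hL'def
  have hL'app : ∀ t : EuclideanSpace ℝ (Fin n), L' t = ∑ i, t i • (w i - x₀) := by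
    intro t
    apply (WithLp.equiv 2 (Fin n → ℝ)).injective
    funext j
    rw [WithLp.equiv_apply]
    have e1 : (L' t) j = ∑ i, M i j * t i := by
      rw [hL'def, Matrix.toEuclideanLin_apply, PiLp.toLp_apply]
      simp only [Matrix.mulVec, dotProduct, Matrix.transpose_apply,
        WithLp.equiv_apply]
    rw [e1]
    have e2 : (WithLp.equiv 2 (Fin n → ℝ)) (∑ i, t i • (w i - x₀)) j
        = ∑ i, t i * (w i - x₀) j := by
      rw [WithLp.equiv_apply]
      have e3 : (∑ i, t i • (w i - x₀)) j =
          (EuclideanSpace.proj j) (∑ i, t i • (w i - x₀)) := rfl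
      rw [e3, map_sum]
      exact Finset.sum_congr rfl fun i _ => by rw [_root_.map_smul]; rfl
    rw [e2]
    exact Finset.sum_congr rfl fun i _ => by
      rw [hMdef]; exact mul_comm _ _
  have himgsub : (fun t => x₀ + L' t) '' simplexSet n ⊆ closure Ω := by
    rintro _ ⟨t, ⟨ht0, ht1⟩, rfl⟩
    show x₀ + L' t ∈ closure Ω
    rw [hL'app]
    set cw : Option (Fin n) → ℝ := fun o => o.elim (1 - ∑ i, t i) t with hcw
    set zz : Option (Fin n) → EuclideanSpace ℝ (Fin n) := fun o => o.elim x₀ w with hzz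
    have hmem : ∑ o : Option (Fin n), cw o • zz o ∈ closure Ω := by
      refine (hconv.closure).sum_mem ?_ ?_ ?_
      · rintro (_ | i) _
        · simp only [hcw, Option.elim]; linarith
        · simpa [hcw] using ht0 i
      · rw [Fintype.sum_option]; simp [hcw]
      · rintro (_ | i) _
        · exact subset_closure hx₀Ω
        · exact hwC i
    have heq : ∑ o : Option (Fin n), cw o • zz o = x₀ + ∑ i, t i • (w i - x₀) := by
      rw [Fintype.sum_option]
      simp only [hcw, hzz, Option.elim]
      rw [sub_smul, one_smul]
      rw [show ∑ i, t i • (w i - x₀) = (∑ i, t i • w i) - (∑ i, t i) • x₀ by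
        rw [Finset.sum_smul]; rw [← Finset.sum_sub_distrib];
        exact Finset.sum_congr rfl fun i _ => smul_sub _ _ _]
      abel
    rw [← heq]
    exact hmem
  have hdetL' : LinearMap.det L' = M.det := by
    rw [hL'def, Matrix.toEuclideanLin_eq_toLin, LinearMap.det_toLin, Matrix.det_transpose]
  have hvolimg : volume ((fun t => x₀ + L' t) '' simplexSet n) =
      ENNReal.ofReal D * volume (simplexSet n) := by
    have h1 : (fun t => x₀ + L' t) '' simplexSet n =
        (fun z => x₀ + z) '' (L' '' simplexSet n) := by rw [Set.image_image]
    rw [h1, Set.image_add_left, measure_preimage_add,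
      Measure.addHaar_image_linearMap, hdetL']
  -- closure has the same volume
  have hclosvol : volume (closure Ω) ≤ volume Ω := by
    have h1 : closure Ω = Ω ∪ frontier Ω := by
      rw [hΩo.frontier_eq, Set.union_diff_cancel subset_closure]
    calc volume (closure Ω) = volume (Ω ∪ frontier Ω) := by rw [← h1]
      _ ≤ volume Ω + volume (frontier Ω) := measure_union_le _ _
      _ = volume Ω := by rw [hconv.addHaar_frontier volume, add_zero]
  have ineq2 : ENNReal.ofReal D * volume (simplexSet n) ≤ volume Ω := by
    rw [← hvolimg]
    exact (measure_mono himgsub).trans hclosvol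
  have ineq1 : ENNReal.ofReal (m ^ n) * volume Q ≤ volume Ω := by
    have h1 : volume (m • Q) = ENNReal.ofReal (m ^ n) * volume Q := by
      rw [Measure.addHaar_smul_of_nonneg volume hm Q, finrank_euclideanSpace_fin]
    calc ENNReal.ofReal (m ^ n) * volume Q = volume (m • Q) := h1.symm
      _ ≤ volume (subgradImage u Ω Ω) := measure_mono hQsub
      _ ≤ volume Ω := hMA Ω subset_rfl hΩo.measurableSet
  -- combine
  have hDD : ENNReal.ofReal D⁻¹ * ENNReal.ofReal D = 1 := by
    rw [← ENNReal.ofReal_mul (inv_nonneg.2 hDpos.le), inv_mul_cancel₀ hDpos.ne',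
      ENNReal.ofReal_one]
  have key : ENNReal.ofReal (m ^ n) * (volume (crossSet n) * volume (simplexSet n)) ≤
      volume Ω * volume Ω := by
    have h2 : (ENNReal.ofReal (m ^ n) * volume Q) * (ENNReal.ofReal D * volume (simplexSet n))
        = ENNReal.ofReal (m ^ n) * (volume (crossSet n) * volume (simplexSet n)) := by
      rw [hvolQ]
      calc ENNReal.ofReal (m ^ n) * (ENNReal.ofReal D⁻¹ * volume (crossSet n)) *
            (ENNReal.ofReal D * volume (simplexSet n))
          = (ENNReal.ofReal D⁻¹ * ENNReal.ofReal D) *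
            (ENNReal.ofReal (m ^ n) * (volume (crossSet n) * volume (simplexSet n))) := by
            ring
        _ = _ := by rw [hDD, one_mul]
    rw [← h2]
    exact mul_le_mul' ineq1 ineq2
  have hΩfin : volume Ω ≠ ⊤ := hb.measure_lt_top.ne
  have hreal : m ^ n * (vB * vS) ≤ (volume Ω).toReal * (volume Ω).toReal := by
    have h3 := ENNReal.toReal_mono (ENNReal.mul_ne_top hΩfin hΩfin) key
    rw [ENNReal.toReal_mul, ENNReal.toReal_mul, ENNReal.toReal_mul,
      ENNReal.toReal_ofReal (pow_nonneg hm n)] at h3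
    exact h3
  -- final arithmetic
  rw [habs]
  rw [show ((n:ℝ)/2) = (n:ℝ) * (1/2) by ring, Real.rpow_mul hm, Real.rpow_natCast,
    ← Real.sqrt_eq_rpow]
  rw [← Real.sqrt_mul (by positivity) (m ^ n)]
  rw [show (volume Ω).toReal = Real.sqrt ((volume Ω).toReal * (volume Ω).toReal) by
    rw [Real.sqrt_mul_self ENNReal.toReal_nonneg]]
  apply Real.sqrt_le_sqrt
  nlinarith [hreal]
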